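/- Let (Ω, F) be a measurable space with a filtration (F_t)_{t∈ℝ₊} satisfying ⋁_t F_t ⊆ F, and let (D_k)_{k∈ℕ} be a decreasing sequence of sets, each a finite union of stochastic intervals ⟦ρ, τ⟧ with ρ a predictable time and τ a stopping time with τ < ∞ (or the empty set). Then the debuts 𝒟[D_k] form a nondecreasing sequence, 𝒟[⋂_{k=1}^∞ D_k] = sup_k 𝒟[D_k] is a predictable time, the graph ⟦𝒟[⋂_k D_k]⟧ is contained in ⋂_k D_k, and π_Ω(⋂_{k=1}^∞ D_k) = ⋂_{k=1}^∞ π_Ω(D_k). -/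

import Mathlib

open MeasureTheory Set
open scoped NNReal ENNReal


variable {Ω : Type*}

/-- A stopping time with respect to the filtration `𝔽`. -/
def IsStopTime {F : MeasurableSpace Ω} (𝔽 : Filtration ℝ≥0 F) (τ : Ω → ℝ≥0∞) : Prop :=
  ∀ t : ℝ≥0, MeasurableSet[𝔽 t] {ω | τ ω ≤ (t : ℝ≥0∞)}

/-- A predictable time: a stopping time announced by a nondecreasing sequence of
finite stopping times. -/
def IsPredTime {F : MeasurableSpace Ω} (𝔽 : Filtration ℝ≥0 F) (ρ : Ω → ℝ≥0∞) : Prop :=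
  IsStopTime 𝔽 ρ ∧ ∃ ρs : ℕ → Ω → ℝ≥0∞,
    (∀ n, IsStopTime 𝔽 (ρs n)) ∧ (∀ n ω, ρs n ω < ⊤) ∧ (∀ n ω, ρs n ω ≤ ρ ω) ∧
    (∀ n ω, 0 < ρ ω → ρs n ω < ρ ω) ∧ (∀ ω, Monotone fun n => ρs n ω) ∧
    (∀ ω, Filter.Tendsto (fun n => ρs n ω) Filter.atTop (nhds (ρ ω)))

/-- The graph `⟦τ⟧ ⊆ Ω × ℝ₊` of `τ : Ω → [0,∞]`. -/
def graph (τ : Ω → ℝ≥0∞) : Set (Ω × ℝ≥0) := {p | τ p.1 = (p.2 : ℝ≥0∞)}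

/-- The stochastic interval `⟦τ, ∞⟦`. -/
def rayFrom (τ : Ω → ℝ≥0∞) : Set (Ω × ℝ≥0) := {p | τ p.1 ≤ (p.2 : ℝ≥0∞)}

/-- The stochastic interval `⟦ρ, τ⟧`. -/
def stInterval (ρ τ : Ω → ℝ≥0∞) : Set (Ω × ℝ≥0) :=
  {p | ρ p.1 ≤ (p.2 : ℝ≥0∞) ∧ (p.2 : ℝ≥0∞) ≤ τ p.1}

/-- The predictable σ-algebra on `Ω × ℝ₊`. -/
def predictableSigma {F : MeasurableSpace Ω} (𝔽 : Filtration ℝ≥0 F) :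
    MeasurableSpace (Ω × ℝ≥0) :=
  MeasurableSpace.generateFrom {s | ∃ ρ, IsPredTime 𝔽 ρ ∧ s = rayFrom ρ}

/-- The optional σ-algebra on `Ω × ℝ₊`. -/
def optionalSigma {F : MeasurableSpace Ω} (𝔽 : Filtration ℝ≥0 F) :
    MeasurableSpace (Ω × ℝ≥0) :=
  MeasurableSpace.generateFrom {s | ∃ τ, IsStopTime 𝔽 τ ∧ s = rayFrom τ}

/-- The debut of a set `S ⊆ Ω × ℝ₊`. -/
noncomputable def debut (S : Set (Ω × ℝ≥0)) (ω : Ω) : ℝ≥0∞ :=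
  ⨅ (t : ℝ≥0) (_ : (ω, t) ∈ S), (t : ℝ≥0∞)

/-- Projection of a subset of `Ω × ℝ₊` onto `Ω`. -/
def projOmega (S : Set (Ω × ℝ≥0)) : Set Ω := Prod.fst '' S

/-- The outer measure `ℙ*` induced by `ℙ`. -/
noncomputable def pstar {F : MeasurableSpace Ω} (P : Measure Ω) (A : Set Ω) : ℝ≥0∞ :=
  ⨅ (E : Set Ω) (_ : A ⊆ E) (_ : MeasurableSet E), P E

/-- The class `ℰ*` of finite unions of stochastic intervals `⟦ρ_k, τ_k⟧` with `ρ_k`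
predictable times and `τ_k` finite stopping times, together with `∅`. -/
def EStar {Ω : Type*} {F : MeasurableSpace Ω} (𝔽 : Filtration ℝ≥0 F) :
    Set (Set (Ω × ℝ≥0)) :=
  {D | D = ∅ ∨ ∃ (n : ℕ) (ρ τ : Fin (n + 1) → Ω → ℝ≥0∞),
    (∀ k, IsPredTime 𝔽 (ρ k)) ∧ (∀ k, IsStopTime 𝔽 (τ k)) ∧ (∀ k ω, τ k ω < ⊤) ∧
    D = ⋃ k, stInterval (ρ k) (τ k)}

open Filter

section Aux

variable {F : MeasurableSpace Ω} {𝔽: Filtration ℝ≥0 F}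

/-- Key measurability lemma: `{σ ≤ τ} ∩ {σ ≤ t} ∈ F_t`. -/
lemma key_meas {σ τ : Ω → ℝ≥0∞} (hσ : IsStopTime 𝔽 σ) (hτ : IsStopTime 𝔽 τ) (t : ℝ≥0) :
    MeasurableSet[𝔽 t] {ω | σ ω ≤ τ ω ∧ σ ω ≤ (t : ℝ≥0∞)} := by
  have hE : MeasurableSet[𝔽 t] ({ω | τ ω < σ ω} ∩ {ω | τ ω ≤ (t : ℝ≥0∞)}) := by
    have heq : {ω | τ ω < σ ω} ∩ {ω | τ ω ≤ (t : ℝ≥0∞)} =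
        ({ω | τ ω ≤ (t : ℝ≥0∞)} ∩ {ω | σ ω ≤ (t : ℝ≥0∞)}ᶜ) ∪
        ⋃ q : ℚ, ⋃ (_ : (Real.toNNReal q : ℝ≥0∞) ≤ (t : ℝ≥0∞)),
          ({ω | τ ω ≤ (Real.toNNReal q : ℝ≥0∞)} ∩ {ω | σ ω ≤ (Real.toNNReal q : ℝ≥0∞)}ᶜ) := by
      ext ω
      simp only [mem_inter_iff, mem_setOf_eq, mem_union, mem_compl_iff, mem_iUnion,
        not_le]
      constructor
      · rintro ⟨hlt, hle⟩
        by_cases hs : (t : ℝ≥0∞) < σ ω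
        · exact Or.inl ⟨hle, hs⟩
        · push_neg at hs
          obtain ⟨q, _, h1, h2⟩ := ENNReal.lt_iff_exists_rat_btwn.mp hlt
          exact Or.inr ⟨q, le_trans h2.le hs, h1.le, h2⟩
      · rintro (⟨h1, h2⟩ | ⟨q, hqt, h1, h2⟩)
        · exact ⟨lt_of_le_of_lt h1 h2, h1⟩
        · exact ⟨lt_of_le_of_lt h1 h2, le_trans h1 hqt⟩
    rw [heq]
    apply MeasurableSet.union
    · exact (hτ t).inter (hσ t).compl
    · refine MeasurableSet.iUnion fun q => ?_
      refine MeasurableSet.iUnion fun hq => ?_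
      have hq' : (Real.toNNReal q : ℝ≥0) ≤ t := by exact_mod_cast hq
      exact MeasurableSet.inter (𝔽.mono hq' _ (hτ _)) (𝔽.mono hq' _ (hσ _)).compl
  have heq2 : {ω | σ ω ≤ τ ω ∧ σ ω ≤ (t : ℝ≥0∞)} =
      ({ω | τ ω ≤ (t : ℝ≥0∞)} \ ({ω | τ ω < σ ω} ∩ {ω | τ ω ≤ (t : ℝ≥0∞)})) ∪
      ({ω | σ ω ≤ (t : ℝ≥0∞)} ∩ {ω | τ ω ≤ (t : ℝ≥0∞)}ᶜ) := by
    ext ω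
    simp only [mem_setOf_eq, mem_union, mem_diff, mem_inter_iff, mem_compl_iff, not_and, not_lt]
    constructor
    · rintro ⟨h1, h2⟩
      by_cases ht : τ ω ≤ (t : ℝ≥0∞)
      · exact Or.inl ⟨ht, fun hlt => absurd hlt (not_lt.mpr h1)⟩
      · exact Or.inr ⟨h2, ht⟩
    · rintro (⟨h1, h2⟩ | ⟨h1, h2⟩)
      · refine ⟨not_lt.mp fun hc => (h2 hc) h1, le_trans (not_lt.mp fun hc => (h2 hc) h1) h1⟩
      · exact ⟨h1.trans (le_of_lt (not_le.mp h2)), h1⟩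
  rw [heq2]
  exact ((hτ t).diff hE).union ((hσ t).inter (hτ t).compl)

noncomputable def restr (ρ τ : Ω → ℝ≥0∞) (ω : Ω) : ℝ≥0∞ :=
  if ρ ω ≤ τ ω then ρ ω else ⊤

lemma isStop_restr {ρ τ : Ω → ℝ≥0∞} (hρ : IsStopTime 𝔽 ρ) (hτ : IsStopTime 𝔽 τ) :
    IsStopTime 𝔽 (restr ρ τ) := by
  intro t
  have : {ω | restr ρ τ ω ≤ (t : ℝ≥0∞)} = {ω | ρ ω ≤ τ ω ∧ ρ ω ≤ (t : ℝ≥0∞)} := by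
    ext ω
    simp only [mem_setOf_eq, restr]
    split_ifs with h
    · simp [h]
    · simp [h, (ENNReal.coe_lt_top (r := t)).not_ge]
  rw [this]; exact key_meas hρ hτ t

lemma isPred_restr {ρ τ : Ω → ℝ≥0∞} (hρ : IsPredTime 𝔽 ρ) (hτ : IsStopTime 𝔽 τ) :
    IsPredTime 𝔽 (restr ρ τ) := by
  obtain ⟨hρst, ρs, hst, hfin, hle, hlt, hmono, htend⟩ := hρ
  refine ⟨isStop_restr hρst hτ, fun n ω => if ρs n ω ≤ τ ω then ρs n ω else max (ρs n ω) n,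
    ?_, ?_, ?_, ?_, ?_, ?_⟩
  · -- stopping times
    intro n t
    dsimp only
    have : {ω | (if ρs n ω ≤ τ ω then ρs n ω else max (ρs n ω) (n : ℝ≥0∞)) ≤ (t : ℝ≥0∞)} =
        {ω | ρs n ω ≤ τ ω ∧ ρs n ω ≤ (t : ℝ≥0∞)} ∪
        (({ω | ρs n ω ≤ (t : ℝ≥0∞)} ∩ {_ω | (n : ℝ≥0∞) ≤ (t : ℝ≥0∞)}) \
          {ω | ρs n ω ≤ τ ω ∧ ρs n ω ≤ (t : ℝ≥0∞)}) := by
      ext ω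
      by_cases h : ρs n ω ≤ τ ω
      · simp only [mem_setOf_eq, mem_union, mem_diff, mem_inter_iff, if_pos h]
        tauto
      · simp only [mem_setOf_eq, mem_union, mem_diff, mem_inter_iff, if_neg h, max_le_iff]
        tauto
    rw [this]
    refine (key_meas (hst n) hτ t).union (MeasurableSet.diff ?_ (key_meas (hst n) hτ t))
    exact ((hst n) t).inter (MeasurableSet.const _)
  · intro n ω
    dsimp only
    split_ifs with h
    · exact hfin n ω
    · exact max_lt (hfin n ω) (ENNReal.natCast_lt_top n)
  · intro n ω
    dsimp only
    simp only [restr]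
    split_ifs with h1 h2 h3
    · exact hle n ω
    · exact le_top
    · exact absurd ((hle n ω).trans h3) h1
    · exact le_top
  · intro n ω h0
    dsimp only
    simp only [restr] at h0 ⊢
    split_ifs with h1 h2 h3
    · exact hlt n ω (by simpa [if_pos h2] using h0)
    · exact hfin n ω
    · exact absurd ((hle n ω).trans h3) h1
    · exact max_lt (hfin n ω) (ENNReal.natCast_lt_top n)
  · intro ω
    dsimp only
    apply monotone_nat_of_le_succ
    intro n
    by_cases h1 : ρs n ω ≤ τ ω <;> by_cases h2 : ρs (n + 1) ω ≤ τ ω <;>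
      simp only [h1, h2, if_true, if_false, if_pos, if_neg]
    · exact hmono ω (Nat.le_succ n)
    · exact le_max_of_le_left (hmono ω (Nat.le_succ n))
    · exact absurd ((hmono ω (Nat.le_succ n)).trans h2) h1
    · exact max_le_max (hmono ω (Nat.le_succ n)) (by exact_mod_cast Nat.le_succ n)
  · intro ω
    dsimp only
    by_cases hA : ρ ω ≤ τ ω
    · have : ∀ n, (if ρs n ω ≤ τ ω then ρs n ω else max (ρs n ω) (n : ℝ≥0∞)) = ρs n ω := by
        intro n; rw [if_pos ((hle n ω).trans hA)]
      simp only [this, restr, if_pos hA]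
      exact htend ω
    · push_neg at hA
      simp only [restr, if_neg (not_le.mpr hA)]
      refine ENNReal.tendsto_nhds_top fun m => ?_
      have hev : ∀ᶠ n in atTop, τ ω < ρs n ω := (htend ω).eventually (eventually_gt_nhds hA)
      filter_upwards [hev, eventually_gt_atTop m] with n h1 h2
      rw [if_neg (not_le.mpr h1)]
      exact lt_of_lt_of_le (by exact_mod_cast h2) (le_max_right _ _)

lemma isPred_min {ρ ρ' : Ω → ℝ≥0∞} (h : IsPredTime 𝔽 ρ) (h' : IsPredTime 𝔽 ρ') :
    IsPredTime 𝔽 (fun ω => min (ρ ω) (ρ' ω)) := by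
  obtain ⟨hst, ρs, has, hfin, hle, hlt, hmono, htend⟩ := h
  obtain ⟨hst', ρs', has', hfin', hle', hlt', hmono', htend'⟩ := h'
  constructor
  · intro t
    have : {ω | min (ρ ω) (ρ' ω) ≤ (t : ℝ≥0∞)} =
        {ω | ρ ω ≤ (t : ℝ≥0∞)} ∪ {ω | ρ' ω ≤ (t : ℝ≥0∞)} := by
      ext ω; simp [min_le_iff]
    rw [this]; exact (hst t).union (hst' t)
  refine ⟨fun n ω => min (ρs n ω) (ρs' n ω), ?_, ?_, ?_, ?_, ?_, ?_⟩
  · intro n t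
    have : {ω | min (ρs n ω) (ρs' n ω) ≤ (t : ℝ≥0∞)} =
        {ω | ρs n ω ≤ (t : ℝ≥0∞)} ∪ {ω | ρs' n ω ≤ (t : ℝ≥0∞)} := by
      ext ω; simp [min_le_iff]
    rw [this]; exact (has n t).union (has' n t)
  · exact fun n ω => lt_of_le_of_lt (min_le_left _ _) (hfin n ω)
  · exact fun n ω => min_le_min (hle n ω) (hle' n ω)
  · intro n ω h0
    rw [lt_min_iff] at h0
    have hρ0 : 0 < ρ ω := h0.1
    have hρ'0 : 0 < ρ' ω := h0.2
    exact lt_min_iff.mpr ⟨lt_of_le_of_lt (min_le_left _ _) (hlt n ω hρ0),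
      lt_of_le_of_lt (min_le_right _ _) (hlt' n ω hρ'0)⟩
  · exact fun ω n m hnm => min_le_min (hmono ω hnm) (hmono' ω hnm)
  · exact fun ω => (htend ω).min (htend' ω)

lemma isPred_top : IsPredTime 𝔽 (fun _ : Ω => (⊤ : ℝ≥0∞)) := by
  constructor
  · intro t
    have : {ω : Ω | (⊤ : ℝ≥0∞) ≤ (t : ℝ≥0∞)} = ∅ := by
      ext ω; simp [(ENNReal.coe_lt_top (r := t)).not_ge]
    rw [this]; exact @MeasurableSet.empty _ (𝔽 t)
  refine ⟨fun n _ => (n : ℝ≥0∞), fun n t => ?_, fun n ω => ENNReal.natCast_lt_top n,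
    fun n ω => le_top, fun n ω _ => ENNReal.natCast_lt_top n,
    fun ω => fun n m hnm => by dsimp only; exact_mod_cast hnm,
    fun ω => ENNReal.tendsto_nat_nhds_top⟩
  · dsimp only
    by_cases h : ((n : ℝ≥0∞) ≤ (t : ℝ≥0∞))
    · simp only [h, setOf_true]; exact @MeasurableSet.univ _ (𝔽 t)
    · simp only [h, setOf_false]; exact @MeasurableSet.empty _ (𝔽 t)

lemma isPred_iInf_fin : ∀ (n : ℕ) (f : Fin (n + 1) → Ω → ℝ≥0∞),
    (∀ i, IsPredTime 𝔽 (f i)) → IsPredTime 𝔽 (fun ω => ⨅ i, f i ω) := by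
  intro n
  induction n with
  | zero =>
    intro f hf
    have : (fun ω => ⨅ i, f i ω) = f 0 := by
      funext ω
      refine le_antisymm (iInf_le _ 0) (le_iInf fun i => ?_)
      have h0 : i = 0 := Fin.ext (Nat.lt_one_iff.mp i.2)
      rw [h0]
    rw [this]; exact hf 0
  | succ m ih =>
    intro f hf
    have : (fun ω => ⨅ i, f i ω) =
        fun ω => min ((fun ω' => ⨅ i : Fin (m + 1), f i.succ ω') ω) (f 0 ω) := by
      funext ω
      apply le_antisymm
      · exact le_min (le_iInf fun i => iInf_le _ i.succ) (iInf_le _ 0)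
      · refine le_iInf fun i => ?_
        rcases Fin.eq_zero_or_eq_succ i with h | ⟨j, hj⟩
        · rw [h]; exact min_le_right _ _
        · rw [hj]; exact le_trans (min_le_left _ _) (iInf_le _ j)
    rw [this]
    exact isPred_min (ih _ fun i => hf i.succ) (hf 0)

lemma isPred_iSup {f : ℕ → Ω → ℝ≥0∞} (hf : ∀ k, IsPredTime 𝔽 (f k)) :
    IsPredTime 𝔽 (fun ω => ⨆ k, f k ω) := by
  have hst : ∀ k, IsStopTime 𝔽 (f k) := fun k => (hf k).1
  choose σs has hfin hle hlt hmono htend using fun k => (hf k).2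
  constructor
  · intro t
    have : {ω | (⨆ k, f k ω) ≤ (t : ℝ≥0∞)} = ⋂ k, {ω | f k ω ≤ (t : ℝ≥0∞)} := by
      ext ω; simp [iSup_le_iff]
    rw [this]; exact MeasurableSet.iInter fun k => hst k t
  refine ⟨fun n ω => (Finset.range (n + 1)).sup (fun k => σs k n ω), ?_, ?_, ?_, ?_, ?_, ?_⟩
  · intro n t
    dsimp only
    have : {ω | (Finset.range (n + 1)).sup (fun k => σs k n ω) ≤ (t : ℝ≥0∞)} =
        ⋂ k ∈ (Finset.range (n + 1) : Set ℕ), {ω | σs k n ω ≤ (t : ℝ≥0∞)} := by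
      ext ω; simp [Finset.sup_le_iff]
    rw [this]
    exact MeasurableSet.biInter (Set.to_countable _) (fun k _ => has k n t)
  · intro n ω
    dsimp only
    exact (Finset.sup_lt_iff (by simp : (⊥ : ℝ≥0∞) < ⊤)).mpr fun k _ => hfin k n ω
  · intro n ω
    dsimp only
    exact Finset.sup_le fun k _ => (hle k n ω).trans (le_iSup (fun j => f j ω) k)
  · intro n ω h0
    dsimp only at h0 ⊢
    refine (Finset.sup_lt_iff (show (⊥ : ℝ≥0∞) < ⨆ k, f k ω from h0)).mpr fun k _ => ?_
    rcases eq_or_lt_of_le (zero_le : (0 : ℝ≥0∞) ≤ f k ω) with hk0 | hk0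
    · exact lt_of_le_of_lt ((hle k n ω).trans hk0.symm.le) h0
    · exact lt_of_lt_of_le (hlt k n ω hk0) (le_iSup (fun j => f j ω) k)
  · intro ω
    dsimp only
    apply monotone_nat_of_le_succ
    intro n
    refine Finset.sup_le fun k hk => ?_
    refine le_trans (hmono k ω (Nat.le_succ n))
      (Finset.le_sup (f := fun j => σs j (n + 1) ω) ?_)
    simp only [Finset.mem_range] at hk ⊢
    omega
  · intro ω
    dsimp only
    have hg : Monotone fun n => (Finset.range (n + 1)).sup (fun k => σs k n ω) := by
      apply monotone_nat_of_le_succ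
      intro n
      refine Finset.sup_le fun k hk => ?_
      refine le_trans (hmono k ω (Nat.le_succ n))
        (Finset.le_sup (f := fun j => σs j (n + 1) ω) ?_)
      simp only [Finset.mem_range] at hk ⊢
      omega
    have h1 := tendsto_atTop_iSup hg
    have h2 : (⨆ n, (Finset.range (n + 1)).sup (fun k => σs k n ω)) = ⨆ k, f k ω := by
      apply le_antisymm
      · exact iSup_le fun n => Finset.sup_le fun k _ => (hle k n ω).trans (le_iSup (fun j => f j ω) k)
      · refine iSup_le fun k => ?_
        have hfk : f k ω = ⨆ n, σs k n ω :=
          tendsto_nhds_unique (htend k ω) (tendsto_atTop_iSup (hmono k ω))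
        rw [hfk]
        refine iSup_le fun n => ?_
        refine le_trans (hmono k ω (le_max_left n k)) ?_
        refine le_trans (Finset.le_sup (f := fun j => σs j (max n k) ω)
          (Finset.mem_range.mpr (Nat.lt_succ_of_le (le_max_right n k)))) ?_
        exact le_iSup (fun m => (Finset.range (m + 1)).sup (fun j => σs j m ω)) (max n k)
    exact h2 ▸ h1

lemma debut_le_of_mem {S : Set (Ω × ℝ≥0)} {ω : Ω} {t : ℝ≥0} (h : (ω, t) ∈ S) :
    debut S ω ≤ (t : ℝ≥0∞) :=
  iInf₂_le t h

lemma debut_antitone {S T : Set (Ω × ℝ≥0)} (h : S ⊆ T) (ω : Ω) : debut T ω ≤ debut S ω :=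
  le_iInf₂ fun t ht => debut_le_of_mem (h ht)

lemma debut_empty (ω : Ω) : debut (∅ : Set (Ω × ℝ≥0)) ω = ⊤ := by
  simp [debut]

lemma debut_iUnion {ι : Sort*} (S : ι → Set (Ω × ℝ≥0)) (ω : Ω) :
    debut (⋃ i, S i) ω = ⨅ i, debut (S i) ω := by
  apply le_antisymm
  · exact le_iInf fun i => debut_antitone (subset_iUnion S i) ω
  · refine le_iInf₂ fun t ht => ?_
    obtain ⟨i, hi⟩ := mem_iUnion.mp ht
    exact (iInf_le _ i).trans (debut_le_of_mem hi)

lemma debut_stInterval {ρ τ : Ω → ℝ≥0∞} (hτ : ∀ ω, τ ω < ⊤) (ω : Ω) :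
    debut (stInterval ρ τ) ω = restr ρ τ ω := by
  unfold restr
  split_ifs with h
  · apply le_antisymm
    · have hne : ρ ω ≠ ⊤ := (h.trans_lt (hτ ω)).ne
      have hmem : (ω, (ρ ω).toNNReal) ∈ stInterval ρ τ :=
        ⟨le_of_eq (ENNReal.coe_toNNReal hne).symm, (ENNReal.coe_toNNReal hne).le.trans h⟩
      exact (debut_le_of_mem hmem).trans_eq (ENNReal.coe_toNNReal hne)
    · exact le_iInf₂ fun t ht => ht.1
  · exact eq_top_iff.mpr (le_iInf₂ fun t ht => (h (ht.1.trans ht.2)).elim)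

lemma debut_attain {n : ℕ} {ρ τ : Fin (n + 1) → Ω → ℝ≥0∞} {S : Set (Ω × ℝ≥0)}
    (hS : S = ⋃ i, stInterval (ρ i) (τ i)) (hτfin : ∀ i ω, τ i ω < ⊤) {ω : Ω}
    (h : debut S ω ≠ ⊤) : (ω, (debut S ω).toNNReal) ∈ S := by
  have hd : debut S ω = ⨅ i, restr (ρ i) (τ i) ω := by
    rw [hS, debut_iUnion]
    exact iInf_congr fun i => debut_stInterval (hτfin i) ω
  obtain ⟨i, hi⟩ : ∃ i, (⨅ j, restr (ρ j) (τ j) ω) = restr (ρ i) (τ i) ω := by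
    obtain ⟨i, hmin⟩ := Finite.exists_min fun j => restr (ρ j) (τ j) ω
    exact ⟨i, le_antisymm (iInf_le _ i) (le_iInf hmin)⟩
  rw [hd, hi] at h ⊢
  have hif : ρ i ω ≤ τ i ω := by
    by_contra hc
    exact h (by rw [restr, if_neg hc])
  have hval : restr (ρ i) (τ i) ω = ρ i ω := by rw [restr, if_pos hif]
  rw [hval] at h ⊢
  rw [hS]
  refine mem_iUnion.mpr ⟨i, ?_, ?_⟩
  · exact (ENNReal.coe_toNNReal h).symm.le
  · exact (ENNReal.coe_toNNReal h).le.trans hif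

lemma exists_infinite_fiber {m : ℕ} (g : ℕ → Fin m) : ∃ i, {j | g j = i}.Infinite := by
  by_contra hc
  push_neg at hc
  have hfin : ∀ i, {j | g j = i}.Finite := fun i => hc i
  have : (Set.univ : Set ℕ).Finite :=
    Set.Finite.subset (Set.finite_iUnion hfin) (fun j _ => mem_iUnion.mpr ⟨g j, rfl⟩)
  exact Set.infinite_univ this

end Aux

/-- for a decreasing sequence `(D_k)` of elements of `ℰ*`, the debuts are
nondecreasing, `𝒟[⋂ₖ D_k] = supₖ 𝒟[D_k]` is a predictable time, its graph lies in
`⋂ₖ D_k`, and `π_Ω(⋂ₖ D_k) = ⋂ₖ π_Ω(D_k)`. -/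
theorem debut_iInter_of_antitone_EStar {Ω : Type*} {F : MeasurableSpace Ω}
    (𝔽 : Filtration ℝ≥0 F) (D : ℕ → Set (Ω × ℝ≥0))
    (hD : ∀ k, D k ∈ EStar 𝔽) (hanti : Antitone D) :
    (∀ ω, Monotone fun k => debut (D k) ω) ∧
      debut (⋂ k, D k) = (fun ω => ⨆ k, debut (D k) ω) ∧
      IsPredTime 𝔽 (debut (⋂ k, D k)) ∧
      graph (debut (⋂ k, D k)) ⊆ ⋂ k, D k ∧
      projOmega (⋂ k, D k) = ⋂ k, projOmega (D k) := by
  have hmonod : ∀ ω, Monotone fun k => debut (D k) ω :=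
    fun ω k l hkl => debut_antitone (hanti hkl) ω
  by_cases hemp : ∃ k0, D k0 = ∅
  · obtain ⟨k0, hk0⟩ := hemp
    have hI : (⋂ k, D k) = ∅ :=
      eq_empty_of_subset_empty (hk0 ▸ iInter_subset D k0)
    have hdI : debut (⋂ k, D k) = fun _ => ⊤ := by
      funext ω; rw [hI]; exact debut_empty ω
    have hde : debut (⋂ k, D k) = fun ω => ⨆ k, debut (D k) ω := by
      funext ω
      rw [hdI]
      refine (top_le_iff.mp ?_).symm
      refine le_trans (le_of_eq ?_) (le_iSup (fun k => debut (D k) ω) k0)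
      rw [hk0, debut_empty]
    refine ⟨hmonod, hde, ?_, ?_, ?_⟩
    · rw [hdI]; exact isPred_top
    · intro p hp
      have : (⊤ : ℝ≥0∞) = (p.2 : ℝ≥0∞) := by
        have := hp
        rw [graph, mem_setOf_eq, hdI] at this
        exact this
      exact absurd this.symm ENNReal.coe_ne_top
    · rw [hI]
      apply subset_antisymm
      · intro x hx
        obtain ⟨p, hp, _⟩ := hx
        exact absurd hp (notMem_empty p)
      · intro x hx
        have := mem_iInter.mp hx k0
        rw [hk0] at this
        obtain ⟨p, hp, _⟩ := this
        exact absurd hp (notMem_empty p)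
  · have hemp' : ∀ k, D k ≠ ∅ := fun k hc => hemp ⟨k, hc⟩
    choose nn ρ τ hρ hτ hτfin hrep using fun k => (hD k).resolve_left (hemp' k)
    -- key closedness fact
    have hclosed : ∀ ω, (⨆ k, debut (D k) ω) ≠ ⊤ →
        ∀ k, (ω, (⨆ k, debut (D k) ω).toNNReal) ∈ D k := by
      intro ω hω k
      have hdle : ∀ m, debut (D m) ω ≤ ⨆ j, debut (D j) ω :=
        fun m => le_iSup (fun j => debut (D j) ω) m
      have hdne : ∀ m, debut (D m) ω ≠ ⊤ :=
        fun m hc => hω (top_le_iff.mp (hc ▸ hdle m))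
      have hmem : ∀ j : ℕ, (ω, (debut (D (k + j)) ω).toNNReal) ∈ D k :=
        fun j => hanti (Nat.le_add_right k j)
          (debut_attain (hrep (k + j)) (hτfin (k + j)) (hdne (k + j)))
      have hch : ∀ j : ℕ, ∃ i : Fin (nn k + 1),
          ρ k i ω ≤ debut (D (k + j)) ω ∧ debut (D (k + j)) ω ≤ τ k i ω := by
        intro j
        have h := hmem j
        rw [hrep k] at h
        obtain ⟨i, hi1, hi2⟩ := mem_iUnion.mp h
        rw [ENNReal.coe_toNNReal (hdne (k + j))] at hi1 hi2
        exact ⟨i, hi1, hi2⟩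
      choose g hg1 hg2 using hch
      obtain ⟨i, hinf⟩ := exists_infinite_fiber g
      obtain ⟨j0, hj0⟩ := hinf.nonempty
      have h1 : ρ k i ω ≤ ⨆ j, debut (D j) ω := by
        refine le_trans ?_ (hdle (k + j0))
        rw [← hj0]; exact hg1 j0
      have h2 : (⨆ j, debut (D j) ω) ≤ τ k i ω := by
        refine iSup_le fun m => ?_
        obtain ⟨j, hjJ, hj⟩ := hinf.exists_gt m
        refine le_trans (hmonod ω (le_trans hj.le (Nat.le_add_left j k))) ?_
        rw [← show g j = i from hjJ]; exact hg2 j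
      rw [hrep k]
      refine mem_iUnion.mpr ⟨i, ?_, ?_⟩
      · rwa [ENNReal.coe_toNNReal hω]
      · rwa [ENNReal.coe_toNNReal hω]
    have heq : ∀ ω, debut (⋂ k, D k) ω = ⨆ k, debut (D k) ω := by
      intro ω
      apply le_antisymm
      · rcases eq_or_ne (⨆ k, debut (D k) ω) ⊤ with h | h
        · rw [h]; exact le_top
        · have hmem : (ω, (⨆ k, debut (D k) ω).toNNReal) ∈ ⋂ k, D k :=
            mem_iInter.mpr (hclosed ω h)
          exact (debut_le_of_mem hmem).trans_eq (ENNReal.coe_toNNReal h)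
      · exact iSup_le fun k => debut_antitone (iInter_subset D k) ω
    have heqf : debut (⋂ k, D k) = fun ω => ⨆ k, debut (D k) ω := funext heq
    have hpred : ∀ k, IsPredTime 𝔽 (debut (D k)) := by
      intro k
      have hk : debut (D k) = fun ω => ⨅ i, restr (ρ k i) (τ k i) ω := by
        funext ω
        rw [hrep k, debut_iUnion]
        exact iInf_congr fun i => debut_stInterval (hτfin k i) ω
      rw [hk]
      exact isPred_iInf_fin (nn k) _ fun i => isPred_restr (hρ k i) (hτ k i)
    refine ⟨hmonod, heqf, ?_, ?_, ?_⟩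
    · rw [heqf]; exact isPred_iSup hpred
    · intro p hp
      have hσp : (⨆ k, debut (D k) p.1) = (p.2 : ℝ≥0∞) := (heq p.1).symm.trans hp
      have hne : (⨆ k, debut (D k) p.1) ≠ ⊤ := by rw [hσp]; exact ENNReal.coe_ne_top
      refine mem_iInter.mpr fun k => ?_
      have h := hclosed p.1 hne k
      rw [hσp, ENNReal.toNNReal_coe] at h
      exact h
    · apply subset_antisymm
      · intro x hx
        obtain ⟨p, hp, rfl⟩ := hx
        exact mem_iInter.mpr fun k => ⟨p, mem_iInter.mp hp k, rfl⟩
      · intro x hx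
        have hfinx : ∀ k, debut (D k) x ≠ ⊤ := by
          intro k
          obtain ⟨p, hp, hpx⟩ := mem_iInter.mp hx k
          have hmem : ((x, p.2) : Ω × ℝ≥0) ∈ D k := by rw [← hpx]; exact hp
          exact ne_top_of_le_ne_top ENNReal.coe_ne_top (debut_le_of_mem hmem)
        have hbd : (⨆ k, debut (D k) x) ≠ ⊤ := by
          have hMlt : (Finset.univ.sup fun i => τ 0 i x) ≠ ⊤ :=
            ((Finset.sup_lt_iff (by simp : (⊥ : ℝ≥0∞) < ⊤)).mpr
              fun i _ => hτfin 0 i x).ne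
          refine ne_top_of_le_ne_top hMlt (iSup_le fun k => ?_)
          have hat : (x, (debut (D k) x).toNNReal) ∈ D 0 :=
            hanti (Nat.zero_le k) (debut_attain (hrep k) (hτfin k) (hfinx k))
          rw [hrep 0] at hat
          obtain ⟨i, hi1, hi2⟩ := mem_iUnion.mp hat
          calc debut (D k) x = ((debut (D k) x).toNNReal : ℝ≥0∞) :=
                (ENNReal.coe_toNNReal (hfinx k)).symm
            _ ≤ τ 0 i x := hi2
            _ ≤ _ := Finset.le_sup (f := fun i => τ 0 i x) (Finset.mem_univ i)
        exact ⟨(x, (⨆ k, debut (D k) x).toNNReal), mem_iInter.mpr (hclosed x hbd), rfl⟩
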